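/- If w ∈ S_n is 321-avoiding, then no reduced decomposition of w contains a consecutive substring of the form (i, i+1, i) or (i+1, i, i+1); equivalently, all reduced decompositions of w lie in a single commutation class. -/

import Mathlib

/-- The adjacent transposition `s_i` of `S_n` (1-based: swaps positions `i` and `i+1`). -/
def adjT (n : ℕ) (i : ℕ) : Equiv.Perm (Fin n) :=
  if h : 1 ≤ i ∧ i < n then Equiv.swap ⟨i - 1, by omega⟩ ⟨i, h.2⟩ else 1

/-- The number of inversions of a permutation of `Fin n`. -/
def invCount (n : ℕ) (w : Equiv.Perm (Fin n)) : ℕ :=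
  (Finset.univ.filter fun p : Fin n × Fin n => p.1 < p.2 ∧ w p.2 < w p.1).card

/-- `ρ` is a reduced decomposition of `w`: a word of length `inv(w)` in the letters
`1, …, n-1` whose product of adjacent transpositions is `w`. -/
def IsReducedDecomp (n : ℕ) (w : Equiv.Perm (Fin n)) (ρ : List ℕ) : Prop :=
  (∀ r ∈ ρ, 1 ≤ r ∧ r < n) ∧ (ρ.map (adjT n)).prod = w ∧ ρ.length = invCount n w

/-- A short braid move: swapping two adjacent letters differing by at least 2. -/
def ShortBraidMove (ρ ρ' : List ℕ) : Prop :=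
  ∃ l r : List ℕ, ∃ a b : ℕ, (a + 2 ≤ b ∨ b + 2 ≤ a) ∧
    ρ = l ++ [a, b] ++ r ∧ ρ' = l ++ [b, a] ++ r

/-- Two words are in the same commutation class iff related by short braid moves. -/
def CommEquiv : List ℕ → List ℕ → Prop := Relation.ReflTransGen ShortBraidMove

/-- A long braid move: `(i+1, i, i+1) ↔ (i, i+1, i)` on a consecutive substring. -/
def LongBraidMove (ρ ρ' : List ℕ) : Prop :=
  ∃ l r : List ℕ, ∃ i : ℕ,
    (ρ = l ++ [i + 1, i, i + 1] ++ r ∧ ρ' = l ++ [i, i + 1, i] ++ r) ∨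
    (ρ = l ++ [i, i + 1, i] ++ r ∧ ρ' = l ++ [i + 1, i, i + 1] ++ r)

/-- The number of commutation classes of reduced decompositions of `w`. -/
noncomputable def numCommClasses (n : ℕ) (w : Equiv.Perm (Fin n)) : ℕ :=
  Nat.card (Quot fun a b : {ρ : List ℕ // IsReducedDecomp n w ρ} => CommEquiv a.1 b.1)

/-- The arrangement (position ↦ value) after the first `k` steps of the word `ρ`. -/
def prefixPerm (n : ℕ) (ρ : List ℕ) (k : ℕ) : Equiv.Perm (Fin n) :=
  ((ρ.take k).map (adjT n)).prod

/-- The word induced by `ρ` on a set `A` of values: record, in order, each step of `ρ`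
swapping two values of `A`, labeled (1-based) by the relative position of the swapped
pair among the values of `A`. -/
def inducedWord (n : ℕ) (ρ : List ℕ) (A : Finset (Fin n)) : List ℕ :=
  (List.range ρ.length).filterMap fun k =>
    let u := prefixPerm n ρ k
    let i := ρ.getD k 0
    if h : 1 ≤ i ∧ i < n then
      if u ⟨i - 1, by omega⟩ ∈ A ∧ u ⟨i, h.2⟩ ∈ A then
        some ((A.filter fun x => (u.symm x : ℕ) < i - 1).card + 1)
      else none
    else none

/-- The number of `(2,1,2)`-subnetworks of `ρ`. -/
def count212 (n : ℕ) (ρ : List ℕ) : ℕ :=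
  (Finset.univ.filter fun A : Finset (Fin n) =>
    A.card = 3 ∧ inducedWord n ρ A = [2, 1, 2]).card

/-- The number of 321-patterns of `w`. -/
def N321 (n : ℕ) (w : Equiv.Perm (Fin n)) : ℕ :=
  (Finset.univ.filter fun t : Fin n × Fin n × Fin n =>
    t.1 < t.2.1 ∧ t.2.1 < t.2.2 ∧ w t.2.2 < w t.2.1 ∧ w t.2.1 < w t.1).card

section Aux
variable {n : ℕ}

theorem Equiv.Perm.inv_apply_self {α : Type*} (f : Equiv.Perm α) (x : α) : f⁻¹ (f x) = x :=
  f.symm_apply_apply x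

theorem Equiv.Perm.apply_inv_self {α : Type*} (f : Equiv.Perm α) (x : α) : f (f⁻¹ x) = x :=
  f.apply_symm_apply x

lemma adjT_valid {i : ℕ} (h1 : 1 ≤ i) (h2 : i < n) :
    adjT n i = Equiv.swap ⟨i - 1, by omega⟩ ⟨i, h2⟩ := by
  rw [adjT, dif_pos ⟨h1, h2⟩]

lemma adjT_mul_self (i : ℕ) : adjT n i * adjT n i = 1 := by
  rw [adjT]; split_ifs with h
  · exact Equiv.swap_mul_self _ _
  · exact one_mul 1

lemma adjT_inv (i : ℕ) : (adjT n i)⁻¹ = adjT n i :=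
  inv_eq_of_mul_eq_one_left (adjT_mul_self i)

lemma swap_lt_swap {i : ℕ} (h1 : 1 ≤ i) (h2 : i < n) {p q : Fin n}
    (hpq : p < q) (hne : ¬(p = ⟨i - 1, by omega⟩ ∧ q = ⟨i, h2⟩)) :
    Equiv.swap (⟨i - 1, by omega⟩ : Fin n) ⟨i, h2⟩ p
      < Equiv.swap (⟨i - 1, by omega⟩ : Fin n) ⟨i, h2⟩ q := by
  simp only [Equiv.swap_apply_def, Fin.ext_iff, Fin.lt_def] at *
  split_ifs <;> simp -failIfUnchanged only [Fin.ext_iff, Fin.lt_def] at * <;> omega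

end Aux
section Aux2
variable {n : ℕ}

lemma invCount_mul_adjT_of_ascent {i : ℕ} (h1 : 1 ≤ i) (h2 : i < n) (u : Equiv.Perm (Fin n))
    (hasc : u ⟨i - 1, by omega⟩ < u ⟨i, h2⟩) :
    invCount n (u * adjT n i) = invCount n u + 1 := by
  set a : Fin n := ⟨i - 1, by omega⟩ with ha
  set b : Fin n := ⟨i, h2⟩ with hb
  have hab : a < b := by rw [Fin.lt_def]; show i - 1 < i; omega
  have hs : adjT n i = Equiv.swap a b := adjT_valid h1 h2
  have happ : ∀ x, (u * adjT n i) x = u (Equiv.swap a b x) := by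
    intro x; rw [hs]; rfl
  set Su := Finset.univ.filter (fun p : Fin n × Fin n => p.1 < p.2 ∧ u p.2 < u p.1) with hSu
  set Sv := Finset.univ.filter
    (fun p : Fin n × Fin n => p.1 < p.2 ∧ (u * adjT n i) p.2 < (u * adjT n i) p.1) with hSv
  have hmemSv : ∀ p : Fin n × Fin n, p ∈ Sv ↔ p.1 < p.2 ∧ (u * adjT n i) p.2 < (u * adjT n i) p.1 := by
    intro p; rw [hSv, Finset.mem_filter]; simp
  have hmemSu : ∀ p : Fin n × Fin n, p ∈ Su ↔ p.1 < p.2 ∧ u p.2 < u p.1 := by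
    intro p; simp [hSu]
  have hab_mem : (a, b) ∈ Sv := by
    rw [hmemSv]
    refine ⟨hab, ?_⟩
    rw [happ, happ, Equiv.swap_apply_left, Equiv.swap_apply_right]
    exact hasc
  have key : Su.card = (Sv.erase (a, b)).card := by
    apply Finset.card_nbij (fun p => (Equiv.swap a b p.1, Equiv.swap a b p.2))
    · intro p hp
      rw [Finset.mem_coe, hmemSu] at hp
      have hne : ¬(p.1 = a ∧ p.2 = b) := by
        rintro ⟨e1, e2⟩
        rw [e1, e2] at hp
        exact absurd hasc (not_lt.2 (le_of_lt hp.2))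
      have hlt : Equiv.swap a b p.1 < Equiv.swap a b p.2 := swap_lt_swap h1 h2 hp.1 hne
      refine Finset.mem_erase.2 ⟨?_, ?_⟩
      · intro hcontra
        have e1 : Equiv.swap a b p.1 = a := congrArg Prod.fst hcontra
        have e2 : Equiv.swap a b p.2 = b := congrArg Prod.snd hcontra
        have f1 : p.1 = b := by
          have := congrArg (Equiv.swap a b) e1
          rwa [Equiv.swap_apply_self, Equiv.swap_apply_left] at this
        have f2 : p.2 = a := by
          have := congrArg (Equiv.swap a b) e2
          rwa [Equiv.swap_apply_self, Equiv.swap_apply_right] at this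
        have hba := hp.1
        rw [f1, f2] at hba
        exact absurd hba (not_lt.2 hab.le)
      · rw [hmemSv]
        refine ⟨hlt, ?_⟩
        rw [happ, happ, Equiv.swap_apply_self, Equiv.swap_apply_self]
        exact hp.2
    · intro p _ q _ hpq
      have e1 : Equiv.swap a b p.1 = Equiv.swap a b q.1 := congrArg Prod.fst hpq
      have e2 : Equiv.swap a b p.2 = Equiv.swap a b q.2 := congrArg Prod.snd hpq
      exact Prod.ext ((Equiv.swap a b).injective e1) ((Equiv.swap a b).injective e2)
    · intro q hq
      simp only [Finset.coe_erase, Set.mem_diff, Finset.mem_coe, Set.mem_singleton_iff] at hq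
      obtain ⟨hqSv, hqne⟩ := hq
      rw [hmemSv] at hqSv
      have hne : ¬(q.1 = a ∧ q.2 = b) := by
        rintro ⟨e1, e2⟩
        exact hqne (Prod.ext e1 e2)
      have hlt : Equiv.swap a b q.1 < Equiv.swap a b q.2 := swap_lt_swap h1 h2 hqSv.1 hne
      refine ⟨(Equiv.swap a b q.1, Equiv.swap a b q.2), ?_, ?_⟩
      · rw [Finset.mem_coe, hmemSu]
        refine ⟨hlt, ?_⟩
        have i2 := hqSv.2
        rw [happ, happ] at i2
        exact i2
      · simp [Equiv.swap_apply_self]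
  have hpos : 1 ≤ Sv.card := Finset.card_pos.2 ⟨(a, b), hab_mem⟩
  have herase : (Sv.erase (a, b)).card = Sv.card - 1 := Finset.card_erase_of_mem hab_mem
  have e1 : invCount n (u * adjT n i) = Sv.card := rfl
  have e2 : invCount n u = Su.card := rfl
  omega

end Aux2
section Aux3
variable {n : ℕ}

set_option maxHeartbeats 1000000 in
lemma invCount_mul_adjT_of_descent {i : ℕ} (h1 : 1 ≤ i) (h2 : i < n) (u : Equiv.Perm (Fin n))
    (hdesc : u ⟨i, h2⟩ < u ⟨i - 1, by omega⟩) :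
    invCount n u = invCount n (u * adjT n i) + 1 := by
  have hs : adjT n i = Equiv.swap ⟨i - 1, by omega⟩ ⟨i, h2⟩ := adjT_valid h1 h2
  have happ : ∀ x, (u * adjT n i) x = u (Equiv.swap ⟨i - 1, by omega⟩ ⟨i, h2⟩ x) := by
    intro x; rw [hs]; rfl
  have hasc : (u * adjT n i) ⟨i - 1, by omega⟩ < (u * adjT n i) ⟨i, h2⟩ := by
    rw [happ, happ, Equiv.swap_apply_left, Equiv.swap_apply_right]
    exact hdesc
  have := invCount_mul_adjT_of_ascent h1 h2 (u * adjT n i) hasc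
  rwa [mul_assoc, adjT_mul_self, mul_one] at this

lemma invCount_inv (w : Equiv.Perm (Fin n)) : invCount n w⁻¹ = invCount n w := by
  apply Finset.card_nbij (fun p : Fin n × Fin n => (w⁻¹ p.2, w⁻¹ p.1))
  · intro p hp
    simp only [Finset.mem_coe, Finset.mem_filter, Finset.mem_univ, true_and] at hp ⊢
    refine ⟨hp.2, ?_⟩
    show w (w⁻¹ p.1) < w (w⁻¹ p.2)
    rw [Equiv.Perm.apply_inv_self, Equiv.Perm.apply_inv_self]
    exact hp.1
  · intro p _ q _ h
    have e1 : w⁻¹ p.2 = w⁻¹ q.2 := congrArg Prod.fst h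
    have e2 : w⁻¹ p.1 = w⁻¹ q.1 := congrArg Prod.snd h
    exact Prod.ext (w⁻¹.injective e2) (w⁻¹.injective e1)
  · intro q hq
    simp only [Finset.mem_coe, Finset.mem_filter, Finset.mem_univ, true_and] at hq
    refine ⟨(w q.2, w q.1), ?_, ?_⟩
    · simp only [Finset.mem_coe, Finset.mem_filter, Finset.mem_univ, true_and]
      refine ⟨hq.2, ?_⟩
      show w⁻¹ (w q.1) < w⁻¹ (w q.2)
      rw [Equiv.Perm.inv_apply_self, Equiv.Perm.inv_apply_self]
      exact hq.1
    · show (w⁻¹ (w q.1), w⁻¹ (w q.2)) = q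
      rw [Equiv.Perm.inv_apply_self, Equiv.Perm.inv_apply_self]

lemma invCount_adjT_mul_of_ascent {i : ℕ} (h1 : 1 ≤ i) (h2 : i < n) (w : Equiv.Perm (Fin n))
    (hasc : w⁻¹ ⟨i - 1, by omega⟩ < w⁻¹ ⟨i, h2⟩) :
    invCount n (adjT n i * w) = invCount n w + 1 := by
  have : invCount n (adjT n i * w) = invCount n (w⁻¹ * adjT n i) := by
    rw [← invCount_inv (adjT n i * w), mul_inv_rev, adjT_inv]
  rw [this, invCount_mul_adjT_of_ascent h1 h2 w⁻¹ hasc, invCount_inv]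

lemma invCount_adjT_mul_of_descent {i : ℕ} (h1 : 1 ≤ i) (h2 : i < n) (w : Equiv.Perm (Fin n))
    (hdesc : w⁻¹ ⟨i, h2⟩ < w⁻¹ ⟨i - 1, by omega⟩) :
    invCount n w = invCount n (adjT n i * w) + 1 := by
  have e : invCount n (adjT n i * w) = invCount n (w⁻¹ * adjT n i) := by
    rw [← invCount_inv (adjT n i * w), mul_inv_rev, adjT_inv]
  rw [e, ← invCount_inv w]
  exact invCount_mul_adjT_of_descent h1 h2 w⁻¹ hdesc

lemma invCount_mul_adjT_le (i : ℕ) (u : Equiv.Perm (Fin n)) :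
    invCount n (u * adjT n i) ≤ invCount n u + 1 := by
  by_cases h : 1 ≤ i ∧ i < n
  · obtain ⟨h1, h2⟩ := h
    rcases lt_or_ge (u ⟨i - 1, by omega⟩) (u ⟨i, h2⟩) with hlt | hge
    · rw [invCount_mul_adjT_of_ascent h1 h2 u hlt]
    · have hne : u (⟨i, h2⟩ : Fin n) ≠ u ⟨i - 1, by omega⟩ := by
        intro he
        have : (⟨i, h2⟩ : Fin n) = ⟨i - 1, by omega⟩ := u.injective he
        have := congrArg Fin.val this
        simp at this; omega
      have hdesc : u (⟨i, h2⟩ : Fin n) < u ⟨i - 1, by omega⟩ := lt_of_le_of_ne hge hne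
      have := invCount_mul_adjT_of_descent h1 h2 u hdesc
      omega
  · rw [adjT, dif_neg h, mul_one]; omega

lemma invCount_adjT_mul_le (i : ℕ) (u : Equiv.Perm (Fin n)) :
    invCount n (adjT n i * u) ≤ invCount n u + 1 := by
  have e : invCount n (adjT n i * u) = invCount n (u⁻¹ * adjT n i) := by
    rw [← invCount_inv (adjT n i * u), mul_inv_rev, adjT_inv]
  rw [e, ← invCount_inv u]
  exact invCount_mul_adjT_le i u⁻¹

lemma invCount_prod_le (ρ : List ℕ) : invCount n (ρ.map (adjT n)).prod ≤ ρ.length := by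
  induction ρ with
  | nil =>
    rw [List.map_nil, List.prod_nil]
    show (Finset.filter (fun p : Fin n × Fin n => p.1 < p.2 ∧ (1 : Equiv.Perm (Fin n)) p.2 < (1 : Equiv.Perm (Fin n)) p.1) Finset.univ).card ≤ 0
    rw [Nat.le_zero, Finset.card_eq_zero, Finset.filter_eq_empty_iff]
    rintro p - ⟨hlt1, hlt2⟩
    simp only [Equiv.Perm.one_apply] at hlt2
    exact absurd hlt2 (not_lt.2 hlt1.le)
  | cons a ρ ih =>
    rw [List.map_cons, List.prod_cons]
    calc invCount n (adjT n a * (ρ.map (adjT n)).prod) ≤ invCount n (ρ.map (adjT n)).prod + 1 :=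
          invCount_adjT_mul_le a _
      _ ≤ ρ.length + 1 := by omega
      _ = (a :: ρ).length := by simp

lemma invCount_mul_prod_le (u : Equiv.Perm (Fin n)) (ρ : List ℕ) :
    invCount n (u * (ρ.map (adjT n)).prod) ≤ invCount n u + ρ.length := by
  induction ρ generalizing u with
  | nil => simp
  | cons a ρ ih =>
    rw [List.map_cons, List.prod_cons, ← mul_assoc]
    calc invCount n (u * adjT n a * (ρ.map (adjT n)).prod)
        ≤ invCount n (u * adjT n a) + ρ.length := ih (u * adjT n a)
      _ ≤ invCount n u + 1 + ρ.length := by have := invCount_mul_adjT_le a u; omega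
      _ = invCount n u + (a :: ρ).length := by simp; omega

end Aux3
section Aux4
variable {n : ℕ}

lemma red_split {w : Equiv.Perm (Fin n)} (σ τ : List ℕ) (h : IsReducedDecomp n w (σ ++ τ)) :
    invCount n ((σ.map (adjT n)).prod) = σ.length := by
  obtain ⟨hrange, hprod, hlen⟩ := h
  rw [List.map_append, List.prod_append] at hprod
  have le1 := invCount_prod_le (n := n) σ
  have le2 : invCount n w ≤ invCount n ((σ.map (adjT n)).prod) + τ.length := by
    rw [← hprod]; exact invCount_mul_prod_le _ τ
  rw [List.length_append] at hlen
  omega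

lemma prod_map_append_single (σ : List ℕ) (a : ℕ) :
    (((σ ++ [a]).map (adjT n)).prod) = (σ.map (adjT n)).prod * adjT n a := by
  rw [List.map_append, List.prod_append, List.map_singleton, List.prod_singleton]

lemma red_ascent {w : Equiv.Perm (Fin n)} (σ τ : List ℕ) {a : ℕ} (ha1 : 1 ≤ a) (ha2 : a < n)
    (h : IsReducedDecomp n w (σ ++ a :: τ)) :
    (σ.map (adjT n)).prod ⟨a - 1, by omega⟩ < (σ.map (adjT n)).prod ⟨a, ha2⟩ := by
  have e1 := red_split σ (a :: τ) h
  have h' : IsReducedDecomp n w ((σ ++ [a]) ++ τ) := by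
    rwa [List.append_assoc, List.singleton_append]
  have e2 := red_split (σ ++ [a]) τ h'
  rw [prod_map_append_single, List.length_append, List.length_singleton] at e2
  set u := (σ.map (adjT n)).prod with hu
  rcases lt_trichotomy (u ⟨a - 1, by omega⟩) (u ⟨a, ha2⟩) with hlt | heq | hgt
  · exact hlt
  · exfalso
    have := u.injective heq
    have := congrArg Fin.val this
    simp only [] at this
    omega
  · exfalso
    have := invCount_mul_adjT_of_descent ha1 ha2 u hgt
    omega

lemma red_persist {w : Equiv.Perm (Fin n)} {ρ : List ℕ} (h : IsReducedDecomp n w ρ) :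
    ∀ τ σ : List ℕ, ρ = σ ++ τ → ∀ x y : Fin n, y < x →
      ((σ.map (adjT n)).prod)⁻¹ x < ((σ.map (adjT n)).prod)⁻¹ y → w⁻¹ x < w⁻¹ y := by
  intro τ
  induction τ with
  | nil =>
    intro σ hρ x y hyx hlt
    rw [List.append_nil] at hρ
    rw [← hρ] at hlt
    rw [h.2.1] at hlt
    exact hlt
  | cons a τ ih =>
    intro σ hρ x y hyx hlt
    have ha : 1 ≤ a ∧ a < n := h.1 a (by rw [hρ]; simp)
    have hred' : IsReducedDecomp n w (σ ++ a :: τ) := by rwa [hρ] at h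
    have hasc := red_ascent σ τ ha.1 ha.2 hred'
    set u := (σ.map (adjT n)).prod with hu
    apply ih (σ ++ [a]) (by rw [hρ, List.append_assoc, List.singleton_append]) x y hyx
    rw [prod_map_append_single, ← hu]
    have hinv : ∀ z, (u * adjT n a)⁻¹ z
        = Equiv.swap (⟨a - 1, by omega⟩ : Fin n) ⟨a, ha.2⟩ (u⁻¹ z) := by
      intro z
      rw [mul_inv_rev, adjT_inv, adjT_valid ha.1 ha.2]
      rfl
    rw [hinv, hinv]
    apply swap_lt_swap ha.1 ha.2 hlt
    rintro ⟨e1, e2⟩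
    have ex : x = u ⟨a - 1, by omega⟩ := by rw [← e1, Equiv.Perm.apply_inv_self]
    have ey : y = u ⟨a, ha.2⟩ := by rw [← e2, Equiv.Perm.apply_inv_self]
    rw [ex, ey] at hyx
    exact absurd hasc (not_lt.2 hyx.le)

end Aux4
section Aux5
variable {n : ℕ}

lemma red_ascent' {w : Equiv.Perm (Fin n)} (σ τ : List ℕ) {a : ℕ} (ha1 : 1 ≤ a) (ha2 : a < n)
    (h : IsReducedDecomp n w (σ ++ a :: τ)) {p q : Fin n}
    (hp : (p : ℕ) = a - 1) (hq : (q : ℕ) = a) :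
    (σ.map (adjT n)).prod p < (σ.map (adjT n)).prod q := by
  have key := red_ascent σ τ ha1 ha2 h
  have ep : p = ⟨a - 1, by omega⟩ := Fin.ext hp
  have eq' : q = ⟨a, ha2⟩ := Fin.ext hq
  rw [ep, eq']
  exact key

lemma pattern_found {w : Equiv.Perm (Fin n)}
    (hav : ¬ ∃ a b c : Fin n, a < b ∧ b < c ∧ w c < w b ∧ w b < w a)
    {σ3 r : List ℕ} (h : IsReducedDecomp n w (σ3 ++ r))
    {A B C : Fin n} (hAB : A < B) (hBC : B < C)
    {p q s : Fin n} (hpq : p < q) (hqs : q < s)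
    (eC : (σ3.map (adjT n)).prod p = C) (eB : (σ3.map (adjT n)).prod q = B)
    (eA : (σ3.map (adjT n)).prod s = A) : False := by
  have iC : ((σ3.map (adjT n)).prod)⁻¹ C = p := by rw [← eC, Equiv.Perm.inv_apply_self]
  have iB : ((σ3.map (adjT n)).prod)⁻¹ B = q := by rw [← eB, Equiv.Perm.inv_apply_self]
  have iA : ((σ3.map (adjT n)).prod)⁻¹ A = s := by rw [← eA, Equiv.Perm.inv_apply_self]
  have w1 : w⁻¹ C < w⁻¹ B :=
    red_persist h r σ3 rfl C B hBC (by rw [iC, iB]; exact hpq)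
  have w2 : w⁻¹ B < w⁻¹ A :=
    red_persist h r σ3 rfl B A hAB (by rw [iB, iA]; exact hqs)
  refine hav ⟨w⁻¹ C, w⁻¹ B, w⁻¹ A, w1, w2, ?_, ?_⟩
  · rw [Equiv.Perm.apply_inv_self, Equiv.Perm.apply_inv_self]; exact hAB
  · rw [Equiv.Perm.apply_inv_self, Equiv.Perm.apply_inv_self]; exact hBC

lemma no_sts {w : Equiv.Perm (Fin n)}
    (hav : ¬ ∃ a b c : Fin n, a < b ∧ b < c ∧ w c < w b ∧ w b < w a)
    {ρ : List ℕ} (h : IsReducedDecomp n w ρ) :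
    ¬ ∃ (l r : List ℕ) (i : ℕ),
      ρ = l ++ [i, i + 1, i] ++ r ∨ ρ = l ++ [i + 1, i, i + 1] ++ r := by
  rintro ⟨l, r, i, hcase | hcase⟩ <;> subst hcase
  · -- case ρ = l ++ [i, i+1, i] ++ r
    have hi1 : 1 ≤ i ∧ i < n := h.1 i (by simp)
    have hi2 : 1 ≤ i + 1 ∧ i + 1 < n := h.1 (i+1) (by simp)
    obtain ⟨hia, hib⟩ := hi1
    obtain ⟨-, hic⟩ := hi2
    set P0 : Fin n := ⟨i - 1, by omega⟩ with hP0
    set P1 : Fin n := ⟨i, hib⟩ with hP1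
    set P2 : Fin n := ⟨i + 1, hic⟩ with hP2
    have hs1 : adjT n i = Equiv.swap P0 P1 := adjT_valid hia hib
    have hs2 : adjT n (i + 1) = Equiv.swap P1 P2 := adjT_valid (by omega) hic
    have ne20 : P2 ≠ P0 := Fin.ne_of_val_ne (by show i + 1 ≠ i - 1; omega)
    have ne21 : P2 ≠ P1 := Fin.ne_of_val_ne (by show i + 1 ≠ i; omega)
    have ne01 : P0 ≠ P1 := Fin.ne_of_val_ne (by show i - 1 ≠ i; omega)
    have ne02 : P0 ≠ P2 := Fin.ne_of_val_ne (by show i - 1 ≠ i + 1; omega)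
    have s1P0 : Equiv.swap P0 P1 P0 = P1 := Equiv.swap_apply_left _ _
    have s1P1 : Equiv.swap P0 P1 P1 = P0 := Equiv.swap_apply_right _ _
    have s1P2 : Equiv.swap P0 P1 P2 = P2 := Equiv.swap_apply_of_ne_of_ne ne20 ne21
    have s2P1 : Equiv.swap P1 P2 P1 = P2 := Equiv.swap_apply_left _ _
    have s2P2 : Equiv.swap P1 P2 P2 = P1 := Equiv.swap_apply_right _ _
    have s2P0 : Equiv.swap P1 P2 P0 = P0 := Equiv.swap_apply_of_ne_of_ne ne01 ne02
    set u := (l.map (adjT n)).prod with hu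
    have hred1 : IsReducedDecomp n w (l ++ i :: ((i+1) :: i :: r)) := by
      have e : l ++ [i, i+1, i] ++ r = l ++ i :: ((i+1) :: i :: r) := by simp
      rwa [e] at h
    have hred2 : IsReducedDecomp n w ((l ++ [i]) ++ (i+1) :: (i :: r)) := by
      have e : l ++ [i, i+1, i] ++ r = (l ++ [i]) ++ (i+1) :: (i :: r) := by simp
      rwa [e] at h
    have hred3 : IsReducedDecomp n w ((l ++ [i, i+1]) ++ i :: r) := by
      have e : l ++ [i, i+1, i] ++ r = (l ++ [i, i+1]) ++ i :: r := by simp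
      rwa [e] at h
    have hredf : IsReducedDecomp n w ((l ++ [i, i+1, i]) ++ r) := by
      have e : l ++ [i, i+1, i] ++ r = (l ++ [i, i+1, i]) ++ r := by simp
      rwa [e] at h
    have hp1 : ((l ++ [i]).map (adjT n)).prod = u * adjT n i := prod_map_append_single l i
    have hp2 : ((l ++ [i, i+1]).map (adjT n)).prod = u * adjT n i * adjT n (i+1) := by
      have e : l ++ [i, i+1] = (l ++ [i]) ++ [i+1] := by simp
      rw [e, prod_map_append_single, hp1]
    have hp3 : ((l ++ [i, i+1, i]).map (adjT n)).prod
        = u * adjT n i * adjT n (i+1) * adjT n i := by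
      have e : l ++ [i, i+1, i] = (l ++ [i, i+1]) ++ [i] := by simp
      rw [e, prod_map_append_single, hp2]
    have a1 : u P0 < u P1 := red_ascent' l ((i+1) :: i :: r) hia hib hred1 rfl rfl
    have a2raw := red_ascent' (l ++ [i]) (i :: r) (by omega) hic hred2
      (p := P1) (q := P2) (by show i = i + 1 - 1; omega) rfl
    rw [hp1] at a2raw
    have a3raw := red_ascent' (l ++ [i, i+1]) r hia hib hred3 (p := P0) (q := P1) rfl rfl
    rw [hp2] at a3raw
    have a3 : u P1 < u P2 := by
      have e1 : (u * adjT n i * adjT n (i+1)) P0 = u P1 := by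
        rw [Equiv.Perm.mul_apply, Equiv.Perm.mul_apply, hs1, hs2, s2P0, s1P0]
      have e2 : (u * adjT n i * adjT n (i+1)) P1 = u P2 := by
        rw [Equiv.Perm.mul_apply, Equiv.Perm.mul_apply, hs1, hs2, s2P1, s1P2]
      rwa [e1, e2] at a3raw
    have f0 : ((l ++ [i, i+1, i]).map (adjT n)).prod P0 = u P2 := by
      rw [hp3, Equiv.Perm.mul_apply, Equiv.Perm.mul_apply, Equiv.Perm.mul_apply,
        hs1, hs2, s1P0, s2P1, s1P2]
    have f1 : ((l ++ [i, i+1, i]).map (adjT n)).prod P1 = u P1 := by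
      rw [hp3, Equiv.Perm.mul_apply, Equiv.Perm.mul_apply, Equiv.Perm.mul_apply,
        hs1, hs2, s1P1, s2P0, s1P0]
    have f2 : ((l ++ [i, i+1, i]).map (adjT n)).prod P2 = u P0 := by
      rw [hp3, Equiv.Perm.mul_apply, Equiv.Perm.mul_apply, Equiv.Perm.mul_apply,
        hs1, hs2, s1P2, s2P2, s1P1]
    have hP01 : P0 < P1 := by rw [Fin.lt_def]; show i - 1 < i; omega
    have hP12 : P1 < P2 := by rw [Fin.lt_def]; show i < i + 1; omega
    exact pattern_found hav hredf a1 a3 hP01 hP12 f0 f1 f2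
  · -- case ρ = l ++ [i+1, i, i+1] ++ r
    have hi1 : 1 ≤ i ∧ i < n := h.1 i (by simp)
    have hi2 : 1 ≤ i + 1 ∧ i + 1 < n := h.1 (i+1) (by simp)
    obtain ⟨hia, hib⟩ := hi1
    obtain ⟨-, hic⟩ := hi2
    set P0 : Fin n := ⟨i - 1, by omega⟩ with hP0
    set P1 : Fin n := ⟨i, hib⟩ with hP1
    set P2 : Fin n := ⟨i + 1, hic⟩ with hP2
    have hs1 : adjT n i = Equiv.swap P0 P1 := adjT_valid hia hib
    have hs2 : adjT n (i + 1) = Equiv.swap P1 P2 := adjT_valid (by omega) hic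
    have ne20 : P2 ≠ P0 := Fin.ne_of_val_ne (by show i + 1 ≠ i - 1; omega)
    have ne21 : P2 ≠ P1 := Fin.ne_of_val_ne (by show i + 1 ≠ i; omega)
    have ne01 : P0 ≠ P1 := Fin.ne_of_val_ne (by show i - 1 ≠ i; omega)
    have ne02 : P0 ≠ P2 := Fin.ne_of_val_ne (by show i - 1 ≠ i + 1; omega)
    have s1P0 : Equiv.swap P0 P1 P0 = P1 := Equiv.swap_apply_left _ _
    have s1P1 : Equiv.swap P0 P1 P1 = P0 := Equiv.swap_apply_right _ _
    have s1P2 : Equiv.swap P0 P1 P2 = P2 := Equiv.swap_apply_of_ne_of_ne ne20 ne21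
    have s2P1 : Equiv.swap P1 P2 P1 = P2 := Equiv.swap_apply_left _ _
    have s2P2 : Equiv.swap P1 P2 P2 = P1 := Equiv.swap_apply_right _ _
    have s2P0 : Equiv.swap P1 P2 P0 = P0 := Equiv.swap_apply_of_ne_of_ne ne01 ne02
    set u := (l.map (adjT n)).prod with hu
    have hred1 : IsReducedDecomp n w (l ++ (i+1) :: (i :: (i+1) :: r)) := by
      have e : l ++ [i+1, i, i+1] ++ r = l ++ (i+1) :: (i :: (i+1) :: r) := by simp
      rwa [e] at h
    have hred2 : IsReducedDecomp n w ((l ++ [i+1]) ++ i :: ((i+1) :: r)) := by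
      have e : l ++ [i+1, i, i+1] ++ r = (l ++ [i+1]) ++ i :: ((i+1) :: r) := by simp
      rwa [e] at h
    have hred3 : IsReducedDecomp n w ((l ++ [i+1, i]) ++ (i+1) :: r) := by
      have e : l ++ [i+1, i, i+1] ++ r = (l ++ [i+1, i]) ++ (i+1) :: r := by simp
      rwa [e] at h
    have hredf : IsReducedDecomp n w ((l ++ [i+1, i, i+1]) ++ r) := by
      have e : l ++ [i+1, i, i+1] ++ r = (l ++ [i+1, i, i+1]) ++ r := by simp
      rwa [e] at h
    have hp1 : ((l ++ [i+1]).map (adjT n)).prod = u * adjT n (i+1) :=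
      prod_map_append_single l (i+1)
    have hp2 : ((l ++ [i+1, i]).map (adjT n)).prod = u * adjT n (i+1) * adjT n i := by
      have e : l ++ [i+1, i] = (l ++ [i+1]) ++ [i] := by simp
      rw [e, prod_map_append_single, hp1]
    have hp3 : ((l ++ [i+1, i, i+1]).map (adjT n)).prod
        = u * adjT n (i+1) * adjT n i * adjT n (i+1) := by
      have e : l ++ [i+1, i, i+1] = (l ++ [i+1, i]) ++ [i+1] := by simp
      rw [e, prod_map_append_single, hp2]
    have a1 : u P1 < u P2 := red_ascent' l (i :: (i+1) :: r) (by omega) hic hred1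
      (p := P1) (q := P2) (by show i = i + 1 - 1; omega) rfl
    have a3raw := red_ascent' (l ++ [i+1]) ((i+1) :: r) hia hib hred2
      (p := P0) (q := P1) rfl rfl
    rw [hp1] at a3raw
    have a2raw := red_ascent' (l ++ [i+1, i]) r (by omega) hic hred3
      (p := P1) (q := P2) (by show i = i + 1 - 1; omega) rfl
    rw [hp2] at a2raw
    have a3 : u P0 < u P1 := by
      have e1 : (u * adjT n (i+1) * adjT n i) P1 = u P0 := by
        rw [Equiv.Perm.mul_apply, Equiv.Perm.mul_apply, hs1, hs2, s1P1, s2P0]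
      have e2 : (u * adjT n (i+1) * adjT n i) P2 = u P1 := by
        rw [Equiv.Perm.mul_apply, Equiv.Perm.mul_apply, hs1, hs2, s1P2, s2P2]
      rwa [e1, e2] at a2raw
    have f0 : ((l ++ [i+1, i, i+1]).map (adjT n)).prod P0 = u P2 := by
      rw [hp3, Equiv.Perm.mul_apply, Equiv.Perm.mul_apply, Equiv.Perm.mul_apply,
        hs1, hs2, s2P0, s1P0, s2P1]
    have f1 : ((l ++ [i+1, i, i+1]).map (adjT n)).prod P1 = u P1 := by
      rw [hp3, Equiv.Perm.mul_apply, Equiv.Perm.mul_apply, Equiv.Perm.mul_apply,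
        hs1, hs2, s2P1, s1P2, s2P2]
    have f2 : ((l ++ [i+1, i, i+1]).map (adjT n)).prod P2 = u P0 := by
      rw [hp3, Equiv.Perm.mul_apply, Equiv.Perm.mul_apply, Equiv.Perm.mul_apply,
        hs1, hs2, s2P2, s1P1, s2P0]
    have hP01 : P0 < P1 := by rw [Fin.lt_def]; show i - 1 < i; omega
    have hP12 : P1 < P2 := by rw [Fin.lt_def]; show i < i + 1; omega
    exact pattern_found hav hredf a3 a1 hP01 hP12 f0 f1 f2

end Aux5
section Aux6
variable {n : ℕ}

lemma strictMono_eq_one {u : Equiv.Perm (Fin n)} (hm : StrictMono u) : u = 1 := by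
  have hiso := StrictMono.orderIsoOfSurjective (u : Fin n → Fin n) hm u.surjective
  have : StrictMono.orderIsoOfSurjective (u : Fin n → Fin n) hm u.surjective
      = OrderIso.refl (Fin n) := Subsingleton.elim _ _
  apply Equiv.ext
  intro x
  have e := congrArg (fun f : Fin n ≃o Fin n => f x) this
  simpa [StrictMono.coe_orderIsoOfSurjective] using e

lemma ascents_strictMono {u : Equiv.Perm (Fin n)}
    (hno : ∀ (i : ℕ) (h1 : 1 ≤ i) (h2 : i < n), ¬ u ⟨i, h2⟩ < u ⟨i - 1, by omega⟩) :
    StrictMono u := by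
  have adj : ∀ (k : ℕ) (hk : k + 1 < n), u ⟨k, by omega⟩ < u ⟨k + 1, hk⟩ := by
    intro k hk
    have hcon := hno (k + 1) (by omega) hk
    have hne : u (⟨k, by omega⟩ : Fin n) ≠ u ⟨k + 1, hk⟩ := by
      intro he
      have := congrArg Fin.val (u.injective he)
      simp at this
    rcases lt_or_ge (u ⟨k, by omega⟩) (u ⟨k + 1, hk⟩) with hlt | hle
    · exact hlt
    · exact absurd (lt_of_le_of_ne hle (Ne.symm hne)) hcon
  cases n with
  | zero => intro a; exact a.elim0
  | succ m =>
    rw [Fin.strictMono_iff_lt_succ]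
    intro k
    exact adj k.val (by omega)

lemma invCount_zero_eq_one {u : Equiv.Perm (Fin n)} (h0 : invCount n u = 0) : u = 1 := by
  apply strictMono_eq_one
  apply ascents_strictMono
  intro i h1 h2 hdesc
  have := invCount_mul_adjT_of_descent h1 h2 u hdesc
  omega

lemma exists_descent {u : Equiv.Perm (Fin n)} (h0 : invCount n u ≠ 0) :
    ∃ i, ∃ (h1 : 1 ≤ i) (h2 : i < n), u ⟨i, h2⟩ < u ⟨i - 1, by omega⟩ := by
  by_contra hno
  push_neg at hno
  apply h0
  have hm : StrictMono u := ascents_strictMono (by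
    intro i h1 h2 hlt
    exact absurd hlt (by simpa using hno i h1 h2))
  rw [invCount, Finset.card_eq_zero, Finset.filter_eq_empty_iff]
  rintro p - ⟨hlt, hinv⟩
  exact absurd hinv (not_lt.2 (hm hlt).le)

lemma exists_red (u : Equiv.Perm (Fin n)) : ∃ ρ, IsReducedDecomp n u ρ := by
  generalize hN : invCount n u = N
  induction N generalizing u with
  | zero =>
    refine ⟨[], fun r hr => absurd hr List.not_mem_nil, ?_, by simp [hN]⟩
    rw [List.map_nil, List.prod_nil, invCount_zero_eq_one hN]
  | succ N ih =>
    obtain ⟨i, h1, h2, hdesc⟩ := exists_descent (by omega : invCount n u ≠ 0)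
    have hstep := invCount_mul_adjT_of_descent h1 h2 u hdesc
    obtain ⟨τ, hr, hp, hl⟩ := ih (u * adjT n i) (by omega)
    refine ⟨τ ++ [i], ?_, ?_, ?_⟩
    · intro r hrm
      rcases List.mem_append.1 hrm with hm | hm
      · exact hr r hm
      · rw [List.mem_singleton.1 hm]; exact ⟨h1, h2⟩
    · rw [prod_map_append_single, hp, mul_assoc, adjT_mul_self, mul_one]
    · rw [List.length_append, List.length_singleton, hl, hN]; omega

end Aux6
section Aux7
variable {n : ℕ}

lemma red_cons {w : Equiv.Perm (Fin n)} {a : ℕ} {ρ₁ : List ℕ}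
    (h : IsReducedDecomp n w (a :: ρ₁)) :
    (1 ≤ a ∧ a < n) ∧ IsReducedDecomp n (adjT n a * w) ρ₁ ∧
      invCount n (adjT n a * w) + 1 = invCount n w := by
  obtain ⟨hr, hp, hl⟩ := h
  have ha := hr a List.mem_cons_self
  rw [List.map_cons, List.prod_cons] at hp
  have hprod : (ρ₁.map (adjT n)).prod = adjT n a * w := by
    rw [← hp, ← mul_assoc, adjT_mul_self, one_mul]
  rw [List.length_cons] at hl
  have hle1 : invCount n (adjT n a * w) ≤ ρ₁.length := by
    rw [← hprod]; exact invCount_prod_le ρ₁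
  have hle2 : invCount n w ≤ invCount n (adjT n a * w) + 1 := by
    calc invCount n w = invCount n (adjT n a * (adjT n a * w)) := by
          rw [← mul_assoc, adjT_mul_self, one_mul]
      _ ≤ invCount n (adjT n a * w) + 1 := invCount_adjT_mul_le a _
  exact ⟨ha, ⟨fun r hr' => hr r (List.mem_cons_of_mem a hr'), hprod, by omega⟩, by omega⟩

lemma red_prepend {w : Equiv.Perm (Fin n)} {a : ℕ} {τ : List ℕ}
    (ha : 1 ≤ a ∧ a < n) (hc : invCount n (adjT n a * w) + 1 = invCount n w)
    (h : IsReducedDecomp n (adjT n a * w) τ) : IsReducedDecomp n w (a :: τ) := by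
  obtain ⟨hr, hp, hl⟩ := h
  refine ⟨?_, ?_, ?_⟩
  · intro r hrm
    rcases List.mem_cons.1 hrm with he | hm
    · rw [he]; exact ha
    · exact hr r hm
  · rw [List.map_cons, List.prod_cons, hp, ← mul_assoc, adjT_mul_self, one_mul]
  · rw [List.length_cons, hl]; omega

lemma ldes_of_count {w : Equiv.Perm (Fin n)} {a : ℕ} (ha1 : 1 ≤ a) (ha2 : a < n)
    (hc : invCount n (adjT n a * w) + 1 = invCount n w) :
    w⁻¹ ⟨a, ha2⟩ < w⁻¹ ⟨a - 1, by omega⟩ := by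
  by_contra hle
  have hne : w⁻¹ (⟨a - 1, by omega⟩ : Fin n) ≠ w⁻¹ ⟨a, ha2⟩ := by
    intro he
    have := congrArg Fin.val (w⁻¹.injective he)
    simp only [] at this
    omega
  have hasc : w⁻¹ (⟨a - 1, by omega⟩ : Fin n) < w⁻¹ ⟨a, ha2⟩ :=
    lt_of_le_of_ne (not_lt.1 hle) hne
  have := invCount_adjT_mul_of_ascent ha1 ha2 w hasc
  omega

lemma adjT_commute {a b : ℕ} (hfar : a + 2 ≤ b ∨ b + 2 ≤ a) :
    adjT n a * adjT n b = adjT n b * adjT n a := by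
  by_cases haa : 1 ≤ a ∧ a < n
  · by_cases hbb : 1 ≤ b ∧ b < n
    · rw [adjT_valid haa.1 haa.2, adjT_valid hbb.1 hbb.2]
      apply Equiv.ext
      intro x
      rw [Equiv.Perm.mul_apply, Equiv.Perm.mul_apply]
      rcases x with ⟨x, hx⟩
      simp only [Equiv.swap_apply_def]
      split_ifs <;> simp only [Fin.ext_iff, Fin.lt_def] at * <;> omega
    · have e : adjT n b = 1 := by rw [adjT, dif_neg hbb]
      rw [e, mul_one, one_mul]
  · have e : adjT n a = 1 := by rw [adjT, dif_neg haa]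
    rw [e, mul_one, one_mul]

lemma sbm_symm : Symmetric ShortBraidMove := by
  rintro x y ⟨l, r, a, b, hab, hx, hy⟩
  exact ⟨l, r, b, a, hab.symm, hy, hx⟩

lemma comm_symm {l l' : List ℕ} (h : CommEquiv l l') : CommEquiv l' l :=
  haveI : Std.Symm ShortBraidMove := ⟨sbm_symm⟩
  Std.Symm.symm (r := Relation.ReflTransGen ShortBraidMove) _ _ h

lemma comm_cons {l l' : List ℕ} (a : ℕ) (h : CommEquiv l l') : CommEquiv (a :: l) (a :: l') := by
  apply Relation.ReflTransGen.lift (fun t => a :: t) (p := ShortBraidMove) ?_ _ _ h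
  show ∀ x y, ShortBraidMove x y → ShortBraidMove (a :: x) (a :: y)
  rintro x y ⟨L, R, c, d, hcd, hx, hy⟩
  exact ⟨a :: L, R, c, d, hcd, by rw [hx]; rfl, by rw [hy]; rfl⟩

lemma sts_exists {w : Equiv.Perm (Fin n)} {i : ℕ} (h1 : 1 ≤ i) (h2 : i + 1 < n)
    (hd1 : w⁻¹ ⟨i, by omega⟩ < w⁻¹ ⟨i - 1, by omega⟩)
    (hd2 : w⁻¹ ⟨i + 1, h2⟩ < w⁻¹ ⟨i, by omega⟩) :
    ∃ τ, IsReducedDecomp n w (i :: (i + 1) :: i :: τ) := by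
  have hib : i < n := by omega
  set P0 : Fin n := ⟨i - 1, by omega⟩ with hP0
  set P1 : Fin n := ⟨i, hib⟩ with hP1
  set P2 : Fin n := ⟨i + 1, h2⟩ with hP2
  have hs1 : adjT n i = Equiv.swap P0 P1 := adjT_valid h1 hib
  have hs2 : adjT n (i + 1) = Equiv.swap P1 P2 := adjT_valid (by omega) h2
  have ne20 : P2 ≠ P0 := Fin.ne_of_val_ne (by show i + 1 ≠ i - 1; omega)
  have ne21 : P2 ≠ P1 := Fin.ne_of_val_ne (by show i + 1 ≠ i; omega)
  have ne01 : P0 ≠ P1 := Fin.ne_of_val_ne (by show i - 1 ≠ i; omega)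
  have ne02 : P0 ≠ P2 := Fin.ne_of_val_ne (by show i - 1 ≠ i + 1; omega)
  have s1P0 : Equiv.swap P0 P1 P0 = P1 := Equiv.swap_apply_left _ _
  have s1P1 : Equiv.swap P0 P1 P1 = P0 := Equiv.swap_apply_right _ _
  have s1P2 : Equiv.swap P0 P1 P2 = P2 := Equiv.swap_apply_of_ne_of_ne ne20 ne21
  have s2P1 : Equiv.swap P1 P2 P1 = P2 := Equiv.swap_apply_left _ _
  have s2P2 : Equiv.swap P1 P2 P2 = P1 := Equiv.swap_apply_right _ _
  have s2P0 : Equiv.swap P1 P2 P0 = P0 := Equiv.swap_apply_of_ne_of_ne ne01 ne02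
  have hd1' : w⁻¹ P1 < w⁻¹ P0 := hd1
  have hd2' : w⁻¹ P2 < w⁻¹ P1 := hd2
  have c1 : invCount n (adjT n i * w) + 1 = invCount n w :=
    (invCount_adjT_mul_of_descent h1 hib w hd1').symm
  set w1 := adjT n i * w with hw1
  have einv1 : ∀ z, w1⁻¹ z = w⁻¹ (adjT n i z) := by
    intro z; rw [hw1, mul_inv_rev, adjT_inv]; rfl
  have hd21 : w1⁻¹ P2 < w1⁻¹ P1 := by
    rw [einv1, einv1, hs1, s1P2, s1P1]
    exact hd2'.trans hd1'
  have c2 : invCount n (adjT n (i + 1) * w1) + 1 = invCount n w1 :=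
    (invCount_adjT_mul_of_descent (by omega) h2 w1 hd21).symm
  set w2 := adjT n (i + 1) * w1 with hw2
  have einv2 : ∀ z, w2⁻¹ z = w1⁻¹ (adjT n (i + 1) z) := by
    intro z; rw [hw2, mul_inv_rev, adjT_inv]; rfl
  have hd32 : w2⁻¹ P1 < w2⁻¹ P0 := by
    rw [einv2, einv2, hs2, s2P1, s2P0, einv1, einv1, hs1, s1P2, s1P0]
    exact hd2'
  have c3 : invCount n (adjT n i * w2) + 1 = invCount n w2 :=
    (invCount_adjT_mul_of_descent h1 hib w2 hd32).symm
  obtain ⟨τ, hτ⟩ := exists_red (adjT n i * w2)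
  refine ⟨τ, red_prepend ⟨h1, hib⟩ c1 (red_prepend ⟨by omega, h2⟩ c2 (red_prepend ⟨h1, hib⟩ c3 hτ))⟩

lemma comm_main : ∀ (N : ℕ) (w : Equiv.Perm (Fin n)), invCount n w ≤ N →
    (∀ ρ, IsReducedDecomp n w ρ →
      ¬ ∃ (l r : List ℕ) (i : ℕ),
        ρ = l ++ [i, i + 1, i] ++ r ∨ ρ = l ++ [i + 1, i, i + 1] ++ r) →
    ∀ ρ ρ', IsReducedDecomp n w ρ → IsReducedDecomp n w ρ' → CommEquiv ρ ρ' := by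
  intro N
  induction N with
  | zero =>
    intro w hN _ ρ ρ' h h'
    have e1 : ρ = [] := List.length_eq_zero_iff.1 (by have := h.2.2; omega)
    have e2 : ρ' = [] := List.length_eq_zero_iff.1 (by have := h'.2.2; omega)
    rw [e1, e2]
    exact Relation.ReflTransGen.refl
  | succ N ih =>
    intro w hN hP ρ ρ' h h'
    cases ρ with
    | nil =>
      have h0 : invCount n w = 0 := by have := h.2.2; simpa using this.symm
      have e2 : ρ' = [] := List.length_eq_zero_iff.1 (by have := h'.2.2; omega)
      rw [e2]
      exact Relation.ReflTransGen.refl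
    | cons a ρ₁ =>
      cases ρ' with
      | nil =>
        have h0 : invCount n w = 0 := by have := h'.2.2; simpa using this.symm
        have := h.2.2
        simp [h0] at this
      | cons b ρ₁' =>
        obtain ⟨ha, h1, hc1⟩ := red_cons h
        obtain ⟨hb, h1', hc1'⟩ := red_cons h'
        have hPa : ∀ τ, IsReducedDecomp n (adjT n a * w) τ →
            ¬ ∃ (l r : List ℕ) (i : ℕ),
              τ = l ++ [i, i + 1, i] ++ r ∨ τ = l ++ [i + 1, i, i + 1] ++ r := by
          rintro τ hτ ⟨l, r, i, hor⟩
          apply hP (a :: τ) (red_prepend ha hc1 hτ)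
          rcases hor with he | he
          · exact ⟨a :: l, r, i, Or.inl (by rw [he]; rfl)⟩
          · exact ⟨a :: l, r, i, Or.inr (by rw [he]; rfl)⟩
        have hPb : ∀ τ, IsReducedDecomp n (adjT n b * w) τ →
            ¬ ∃ (l r : List ℕ) (i : ℕ),
              τ = l ++ [i, i + 1, i] ++ r ∨ τ = l ++ [i + 1, i, i + 1] ++ r := by
          rintro τ hτ ⟨l, r, i, hor⟩
          apply hP (b :: τ) (red_prepend hb hc1' hτ)
          rcases hor with he | he
          · exact ⟨b :: l, r, i, Or.inl (by rw [he]; rfl)⟩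
          · exact ⟨b :: l, r, i, Or.inr (by rw [he]; rfl)⟩
        by_cases hab : a = b
        · subst hab
          exact comm_cons a (ih (adjT n a * w) (by omega) hPa ρ₁ ρ₁' h1 h1')
        · by_cases hfar : a + 2 ≤ b ∨ b + 2 ≤ a
          · have hcomm : adjT n a * adjT n b = adjT n b * adjT n a := adjT_commute hfar
            have hvb := ldes_of_count hb.1 hb.2 hc1'
            have hvb' : (adjT n a * w)⁻¹ ⟨b, hb.2⟩ < (adjT n a * w)⁻¹ ⟨b - 1, by omega⟩ := by
              have e : ∀ z : Fin n, (adjT n a * w)⁻¹ z = w⁻¹ (adjT n a z) := by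
                intro z; rw [mul_inv_rev, adjT_inv]; rfl
              have f1 : adjT n a (⟨b, hb.2⟩ : Fin n) = ⟨b, hb.2⟩ := by
                rw [adjT_valid ha.1 ha.2]
                apply Equiv.swap_apply_of_ne_of_ne <;>
                  exact Fin.ne_of_val_ne (by simp only []; omega)
              have f0 : adjT n a (⟨b - 1, by omega⟩ : Fin n) = ⟨b - 1, by omega⟩ := by
                rw [adjT_valid ha.1 ha.2]
                apply Equiv.swap_apply_of_ne_of_ne <;>
                  exact Fin.ne_of_val_ne (by simp only []; omega)
              rw [e, e, f0, f1]
              exact hvb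
            have hdes2 := invCount_adjT_mul_of_descent hb.1 hb.2 (adjT n a * w) hvb'
            obtain ⟨τ, hτ⟩ := exists_red (adjT n b * (adjT n a * w))
            have hred_bτ : IsReducedDecomp n (adjT n a * w) (b :: τ) :=
              red_prepend hb hdes2.symm hτ
            have hw2 : adjT n a * (adjT n b * w) = adjT n b * (adjT n a * w) := by
              rw [← mul_assoc, hcomm, mul_assoc]
            have hcnt' : invCount n (adjT n a * (adjT n b * w)) + 1
                = invCount n (adjT n b * w) := by
              rw [hw2]; omega
            have hred_aτ : IsReducedDecomp n (adjT n b * w) (a :: τ) :=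
              red_prepend ha hcnt' (by rw [hw2]; exact hτ)
            have cm1 : CommEquiv ρ₁ (b :: τ) :=
              ih (adjT n a * w) (by omega) hPa ρ₁ (b :: τ) h1 hred_bτ
            have cm2 : CommEquiv ρ₁' (a :: τ) :=
              ih (adjT n b * w) (by omega) hPb ρ₁' (a :: τ) h1' hred_aτ
            have m : ShortBraidMove (a :: b :: τ) (b :: a :: τ) :=
              ⟨[], τ, a, b, hfar, rfl, rfl⟩
            exact ((comm_cons a cm1).trans (Relation.ReflTransGen.single m)).trans
              (comm_symm (comm_cons b cm2))
          · exfalso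
            have hva := ldes_of_count ha.1 ha.2 hc1
            have hvb := ldes_of_count hb.1 hb.2 hc1'
            rcases (by omega : b = a + 1 ∨ a = b + 1) with hba | hab1
            · subst hba
              obtain ⟨τ, hτ⟩ := sts_exists ha.1 hb.2 hva hvb
              exact hP _ hτ ⟨[], τ, a, Or.inl rfl⟩
            · subst hab1
              obtain ⟨τ, hτ⟩ := sts_exists hb.1 ha.2 hvb hva
              exact hP _ hτ ⟨[], τ, b, Or.inl rfl⟩

end Aux7

/-- If `w` is 321-avoiding then no reduced decomposition of `w` contains a
consecutive substring `(i, i+1, i)` or `(i+1, i, i+1)`; equivalently, all reduced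
decompositions of `w` lie in a single commutation class. -/
theorem avoiding321_single_commutation_class
    (n : ℕ) (w : Equiv.Perm (Fin n))
    (hav : ¬ ∃ a b c : Fin n, a < b ∧ b < c ∧ w c < w b ∧ w b < w a) :
    (∀ ρ : List ℕ, IsReducedDecomp n w ρ →
      ¬ ∃ (l r : List ℕ) (i : ℕ),
        ρ = l ++ [i, i + 1, i] ++ r ∨ ρ = l ++ [i + 1, i, i + 1] ++ r) ∧
    (∀ ρ ρ' : List ℕ, IsReducedDecomp n w ρ → IsReducedDecomp n w ρ' →
      CommEquiv ρ ρ') := by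
  constructor
  · intro ρ hρ
    exact no_sts hav hρ
  · intro ρ ρ' h h'
    exact comm_main (invCount n w) w le_rfl (fun τ hτ => no_sts hav hτ) ρ ρ' h h'
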